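/- For every pairwise reciprocal matrix A of size n ≥ 1, the matrix G = Ḡ + J is positive definite; in particular G is invertible. -/

import Mathlib

open Matrix BigOperators

/-- A pairwise reciprocal matrix (PRM): all entries positive and `A i j * A j i = 1`. -/
def IsPRM {n : ℕ} (A : Matrix (Fin n) (Fin n) ℝ) : Prop :=
  ∀ i j, 0 < A i j ∧ A i j * A j i = 1

/-- The matrix `Ḡ` with diagonal `(n-1) + ∑_{k ≠ i} (A k i)^2` and
off-diagonal `-(A i j + A j i)`. -/
noncomputable def Gbar {n : ℕ} (A : Matrix (Fin n) (Fin n) ℝ) :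
    Matrix (Fin n) (Fin n) ℝ :=
  Matrix.of fun i j =>
    if i = j then ((n : ℝ) - 1) + ∑ k ∈ Finset.univ.filter (fun k => k ≠ i), (A k i) ^ 2
    else -(A i j + A j i)

/-- The all-ones matrix `J`. -/
noncomputable def Jmat (n : ℕ) : Matrix (Fin n) (Fin n) ℝ :=
  Matrix.of fun _ _ => 1

/-- `G = Ḡ + J`. -/
noncomputable def Gmat {n : ℕ} (A : Matrix (Fin n) (Fin n) ℝ) :
    Matrix (Fin n) (Fin n) ℝ :=
  Gbar A + Jmat n

/-- The weighted least squares objective `f(w) = ∑ i ∑ j (w i - A i j * w j)^2`. -/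
noncomputable def wls {n : ℕ} (A : Matrix (Fin n) (Fin n) ℝ) (w : Fin n → ℝ) : ℝ :=
  ∑ i, ∑ j, (w i - A i j * w j) ^ 2

lemma prm_diag_one {n : ℕ} {A : Matrix (Fin n) (Fin n) ℝ} (hA : IsPRM A) (i : Fin n) :
    A i i = 1 := by
  have h := hA i i
  nlinarith [h.1, h.2]

lemma Gmat_entry {n : ℕ} {A : Matrix (Fin n) (Fin n) ℝ} (hA : IsPRM A) (i j : Fin n) :
    Gmat A i j = (if i = j then ((n : ℝ) + ∑ k, (A k i) ^ 2) else 0)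
      - (A i j + A j i) + 1 := by
  have hAii := prm_diag_one hA
  by_cases hij : i = j
  · subst hij
    simp only [Gmat, Gbar, Jmat, Matrix.add_apply, Matrix.of_apply, if_pos rfl]
    have h : ∑ k, (A k i) ^ 2
        = (A i i) ^ 2 + ∑ k ∈ Finset.univ.filter (fun k => k ≠ i), (A k i) ^ 2 := by
      rw [Finset.filter_ne', ← Finset.add_sum_erase _ _ (Finset.mem_univ i)]
    rw [h, hAii i]
    norm_num
    ring
  · simp only [Gmat, Gbar, Jmat, Matrix.add_apply, Matrix.of_apply, if_neg hij]
    ring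

lemma quad_form {n : ℕ} {A : Matrix (Fin n) (Fin n) ℝ} (hA : IsPRM A) (x : Fin n → ℝ) :
    x ⬝ᵥ Gmat A *ᵥ x = wls A x + (∑ i, x i) ^ 2 := by
  have h1 : ∑ i, ∑ j, (A i j) ^ 2 * (x j) ^ 2 = ∑ i, ∑ j, (A j i) ^ 2 * (x i) ^ 2 :=
    Finset.sum_comm
  have h2 : ∑ i, ∑ j, A i j * (x i * x j) = ∑ i, ∑ j, A j i * (x i * x j) := by
    rw [Finset.sum_comm]
    exact Finset.sum_congr rfl fun i _ => Finset.sum_congr rfl fun j _ => by ring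
  have hL : x ⬝ᵥ Gmat A *ᵥ x
      = ∑ i, (((n : ℝ) + ∑ k, (A k i) ^ 2) * (x i * x i)
          - ∑ j, ((A i j + A j i) * (x i * x j)) + ∑ j, (x i * x j)) := by
    simp only [dotProduct, mulVec]
    refine Finset.sum_congr rfl fun i _ => ?_
    have h : x i * ∑ j, Gmat A i j * x j
        = ∑ j, ((if i = j then ((n : ℝ) + ∑ k, (A k i) ^ 2) * (x i * x j) else 0)
            - (A i j + A j i) * (x i * x j) + x i * x j) := by
      rw [Finset.mul_sum]
      refine Finset.sum_congr rfl fun j _ => ?_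
      rw [Gmat_entry hA]
      by_cases hij : i = j <;> simp [hij] <;> ring
    rw [h, Finset.sum_add_distrib, Finset.sum_sub_distrib, Finset.sum_ite_eq]
    simp
  rw [hL]
  have hR : wls A x + (∑ i, x i) ^ 2
      = ∑ i, ∑ j, ((x i - A i j * x j) ^ 2 + x i * x j) := by
    rw [wls, sq (∑ i, x i), Finset.sum_mul_sum, ← Finset.sum_add_distrib]
    exact Finset.sum_congr rfl fun i _ => (Finset.sum_add_distrib).symm
  rw [hR]
  have expandL : ∀ i, (((n : ℝ) + ∑ k, (A k i) ^ 2) * (x i * x i)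
          - ∑ j, ((A i j + A j i) * (x i * x j)) + ∑ j, (x i * x j))
      = ∑ j, ((x i) ^ 2 + (A j i) ^ 2 * (x i) ^ 2
          - (A i j * (x i * x j) + A j i * (x i * x j)) + x i * x j) := by
    intro i
    have e : ∑ j, ((A i j + A j i) * (x i * x j))
        = ∑ j, (A i j * (x i * x j)) + ∑ j, (A j i * (x i * x j)) := by
      rw [← Finset.sum_add_distrib]
      exact Finset.sum_congr rfl fun j _ => by ring
    simp only [Finset.sum_add_distrib, Finset.sum_sub_distrib]
    rw [e, ← Finset.sum_mul, Finset.sum_const, Finset.card_univ, Fintype.card_fin,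
      nsmul_eq_mul]
    ring
  have expandR : ∀ i, ∑ j, ((x i - A i j * x j) ^ 2 + x i * x j)
      = ∑ j, ((x i) ^ 2 + (A i j) ^ 2 * (x j) ^ 2
          - (A i j * (x i * x j) + A i j * (x i * x j)) + x i * x j) := by
    intro i
    exact Finset.sum_congr rfl fun j _ => by ring
  simp only [expandL, expandR]
  simp only [Finset.sum_add_distrib, Finset.sum_sub_distrib]
  rw [h1, h2]

/-- For every PRM `A` of size `n ≥ 1`, the matrix `G = Ḡ + J` is positive
definite; in particular `G` is invertible. -/
theorem Gmat_posDef_and_isUnit {n : ℕ} (hn : 1 ≤ n)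
    (A : Matrix (Fin n) (Fin n) ℝ) (hA : IsPRM A) :
    (Gmat A).PosDef ∧ IsUnit (Gmat A) := by
  have hherm : (Gmat A).IsHermitian := by
    ext i j
    simp only [Gmat, Gbar, Jmat, conjTranspose_apply, Matrix.add_apply, Matrix.of_apply,
      star_trivial]
    by_cases hij : i = j
    · subst hij; rfl
    · rw [if_neg (Ne.symm hij), if_neg hij]; ring
  have hpd : (Gmat A).PosDef := by
    refine Matrix.PosDef.of_dotProduct_mulVec_pos hherm fun x hx => ?_
    simp only [star_trivial]
    rw [quad_form hA x]
    have hwls : 0 ≤ wls A x := Finset.sum_nonneg fun i _ =>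
      Finset.sum_nonneg fun j _ => sq_nonneg _
    rcases lt_or_eq_of_le hwls with h | h
    · nlinarith [sq_nonneg (∑ i, x i)]
    · have hall : ∀ i j : Fin n, x i = A i j * x j := by
        intro i j
        have h0 := (Finset.sum_eq_zero_iff_of_nonneg (fun i _ =>
          Finset.sum_nonneg fun j _ => sq_nonneg (x i - A i j * x j))).1 h.symm i
          (Finset.mem_univ i)
        have h1 := (Finset.sum_eq_zero_iff_of_nonneg (fun j _ =>
          sq_nonneg (x i - A i j * x j))).1 h0 j (Finset.mem_univ j)
        have h2 := pow_eq_zero_iff (n := 2) (by norm_num) |>.1 h1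
        linarith
      obtain ⟨i, hxi⟩ := Function.ne_iff.1 hx
      have hsum : ∑ k, x k = (∑ k, A k i) * x i := by
        rw [Finset.sum_mul]
        exact Finset.sum_congr rfl fun k _ => hall k i
      have hpos : 0 < ∑ k, A k i :=
        Finset.sum_pos (fun k _ => (hA k i).1) ⟨i, Finset.mem_univ i⟩
      have hne : ∑ k, x k ≠ 0 := by
        rw [hsum]; exact mul_ne_zero hpos.ne' hxi
      have hsq : 0 < (∑ k, x k) ^ 2 := by positivity
      rw [← h]
      linarith
  exact ⟨hpd, hpd.isUnit⟩
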